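/- Let 0<q<1, C_n = (1/4)(1-(-1)ⁿq^{n/2})(1-(-1)ⁿq^{(n-1)/2}), b_n = 2C_n q^{-(n-1)/2}, α = (q^{1/2}+q^{-1/2})/2, and d_n = (b_{n-1}C_n - α b_n C_{n-1})C_{n-2}. Then d_n = (q-1) q^{-n/2} C_n C_{n-1} C_{n-2} for all n ≥ 2. -/
import Mathlib


noncomputable def alphaQ (q : ℝ) : ℝ := (q ^ ((1 : ℝ) / 2) + q ^ (-(1 : ℝ) / 2)) / 2

noncomputable def Cn (q : ℝ) (n : ℕ) : ℝ :=
  (1 / 4) * (1 - (-1 : ℝ) ^ n * q ^ ((n : ℝ) / 2)) * (1 - (-1 : ℝ) ^ n * q ^ (((n : ℝ) - 1) / 2))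

noncomputable def bn (q : ℝ) (n : ℕ) : ℝ := 2 * Cn q n * q ^ (-((n : ℝ) - 1) / 2)

noncomputable def dn (q : ℝ) (n : ℕ) : ℝ :=
  (bn q (n - 1) * Cn q n - alphaQ q * bn q n * Cn q (n - 1)) * Cn q (n - 2)

theorem stmt_13 (q : ℝ) (hq0 : 0 < q) (hq1 : q < 1) (n : ℕ) (hn : 2 ≤ n) :
    dn q n = (q - 1) * q ^ (-(n : ℝ) / 2) * Cn q n * Cn q (n - 1) * Cn q (n - 2) := by
  unfold dn bn alphaQ
  have hc : ((n - 1 : ℕ) : ℝ) = (n : ℝ) - 1 := by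
    have : 1 ≤ n := by omega
    push_cast [this]; ring
  rw [hc]
  have e1 : q ^ (-(((n : ℝ) - 1) - 1) / 2) = q * q ^ (-(n : ℝ) / 2) := by
    rw [show (-(((n : ℝ) - 1) - 1) / 2) = 1 + (-(n : ℝ) / 2) by ring,
      Real.rpow_add hq0, Real.rpow_one]
  have e2 : q ^ (-((n : ℝ) - 1) / 2) = q ^ ((1 : ℝ) / 2) * q ^ (-(n : ℝ) / 2) := by
    rw [← Real.rpow_add hq0]; ring_nf
  have e3 : q ^ ((1 : ℝ) / 2) * q ^ ((1 : ℝ) / 2) = q := by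
    rw [← Real.rpow_add hq0]; norm_num
  have e4 : q ^ ((1 : ℝ) / 2) * q ^ (-(1 : ℝ) / 2) = 1 := by
    rw [← Real.rpow_add hq0]; norm_num
  rw [e1, e2]
  linear_combination (Cn q n * Cn q (n - 1) * Cn q (n - 2) * q ^ (-(n : ℝ) / 2)) * (-e3 - e4)
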